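/- arXiv:2010.03440 — 2 statements merged into one kernel-verified Lean document; each statement's English description precedes it below -/
import Mathlib

section
/- For n ≥ 1 define D_n = lcm{ k · j_1!···j_k! : k ∈ {1,...,n}, j_i ≥ 1, j_1+...+j_k = n } and d_n = ∏_{p prime, p < n} p^{max{t : p^t ≤ s_p(n)}}, where s_p(n) is the base-p digit sum of n. Then D_n = n! · d_n. -/
/-- base-p digit sum -/
def sp (p n : ℕ) : ℕ := (Nat.digits p n).sum

/-- `D n` : the lcm of `k * j₁! ⋯ jₖ!` over all compositions of `n` into `k ≥ 1` positive parts. -/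
def Dn (n : ℕ) : ℕ :=
  (Finset.Icc 1 n).lcm fun k =>
    (((Finset.Nat.antidiagonalTuple k n).filter fun j => ∀ i, 1 ≤ j i).lcm
      fun j => k * ∏ i, Nat.factorial (j i))

/-- `d n = ∏_{p prime, p < n} p ^ (max { t : p ^ t ≤ sₚ(n)})`. -/
def dn (n : ℕ) : ℕ :=
  ∏ p ∈ (Finset.range n).filter Nat.Prime, p ^ Nat.log p (sp p n)

lemma sp_le (p n : ℕ) : sp p n ≤ n := Nat.digit_sum_le p n

lemma sp_lt_base {p m : ℕ} (hp : 2 ≤ p) (hm : m < p) : sp p m = m := by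
  rcases Nat.eq_zero_or_pos m with h | h
  · simp [sp, h]
  · rw [sp, Nat.digits_def' hp h, Nat.mod_eq_of_lt hm, Nat.div_eq_of_lt hm]
    simp

lemma sp_rec {p m : ℕ} (hp : 2 ≤ p) (hm : 0 < m) : sp p m = m % p + sp p (m / p) := by
  rw [sp, Nat.digits_def' hp hm, List.sum_cons]; rfl

lemma sp_pos {p : ℕ} (hp : 2 ≤ p) : ∀ {n : ℕ}, 1 ≤ n → 1 ≤ sp p n := by
  intro n
  induction n using Nat.strong_induction_on with
  | _ n ih =>
    intro hn
    rw [sp_rec hp hn]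
    rcases Nat.lt_or_ge n p with h | h
    · rw [Nat.mod_eq_of_lt h, Nat.div_eq_of_lt h]; omega
    · have h1 : 1 ≤ n / p := (Nat.one_le_div_iff (by omega)).mpr h
      have := ih (n / p) (Nat.div_lt_self (by omega) (by omega)) h1
      omega

lemma sp_pow {p : ℕ} (hp : 2 ≤ p) (e : ℕ) : sp p (p ^ e) = 1 := by
  induction e with
  | zero => simpa using sp_lt_base hp (by omega : 1 < p)
  | succ e ih =>
    have hpos : 0 < p ^ (e + 1) := Nat.pow_pos (by omega)
    rw [sp_rec hp hpos, pow_succ, Nat.mul_mod_left, Nat.mul_div_cancel _ (by omega : 0 < p)]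
    simpa using ih

lemma sp_sub_pow_log {p : ℕ} (hp : 2 ≤ p) : ∀ {n : ℕ}, 1 ≤ n →
    sp p (n - p ^ Nat.log p n) = sp p n - 1 := by
  intro n
  induction n using Nat.strong_induction_on with
  | _ n ih =>
    intro hn
    rcases Nat.lt_or_ge n p with h | h
    · have hl : Nat.log p n = 0 := Nat.log_eq_zero_iff.mpr (Or.inl h)
      rw [hl, pow_zero, sp_lt_base hp (by omega), sp_lt_base hp h]
    · have he1 : 1 ≤ Nat.log p n := Nat.log_pos (by omega) h
      set e := Nat.log p n with he
      set q := n / p with hq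
      have hq1 : 1 ≤ q := (Nat.one_le_div_iff (by omega)).mpr h
      have hlogq : Nat.log p q = e - 1 := by rw [hq, Nat.log_div_base, he]
      have hqlt : q < n := Nat.div_lt_self (by omega) (by omega)
      have hple : p ^ (e - 1) ≤ q := by
        rw [← hlogq]; exact Nat.pow_log_le_self p (by omega)
      have hdm : n = p * q + n % p := by
        rw [hq]; exact (Nat.div_add_mod n p).symm
      have hrp : n % p < p := Nat.mod_lt _ (by omega)
      have h2 : p ^ e = p * p ^ (e - 1) := by
        rw [← pow_succ']; congr 1; omega
      have hkey : n - p ^ e = p * (q - p ^ (e - 1)) + n % p := by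
        rw [Nat.mul_sub, h2] at *
        have : p * p ^ (e-1) ≤ p * q := Nat.mul_le_mul_left _ hple
        omega
      have hspn : sp p n = n % p + sp p q := by rw [sp_rec hp hn]
      rcases Nat.eq_or_lt_of_le hple with heq | hlt
      · -- q = p^(e-1), remainder is n % p
        have : q - p ^ (e - 1) = 0 := by omega
        rw [hkey, this, Nat.mul_zero, Nat.zero_add, sp_lt_base hp hrp, hspn, ← heq,
          sp_pow hp]
        omega
      · -- q > p^(e-1)
        have hq'pos : 0 < q - p ^ (e - 1) := by omega
        have hpos : 0 < p * (q - p ^ (e - 1)) + n % p := by positivity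
        have hmod : (p * (q - p ^ (e - 1)) + n % p) % p = n % p := by
          rw [Nat.mul_add_mod, Nat.mod_eq_of_lt hrp]
        have hdiv : (p * (q - p ^ (e - 1)) + n % p) / p = q - p ^ (e - 1) := by
          rw [Nat.mul_add_div (by omega : 0 < p), Nat.div_eq_of_lt hrp]; omega
        have hIH : sp p (q - p ^ (e - 1)) = sp p q - 1 := by
          have := ih q hqlt hq1
          rwa [hlogq] at this
        have hsq := sp_pos hp hq1
        rw [hkey, sp_rec hp hpos, hmod, hdiv, hIH, hspn]
        omega

/-- Legendre's formula in exact additive form. -/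
lemma legendre' {p : ℕ} (hp : p.Prime) (m : ℕ) :
    sp p m + (p - 1) * (Nat.factorial m).factorization p = m := by
  haveI : Fact p.Prime := ⟨hp⟩
  have h := sub_one_mul_padicValNat_factorial (p := p) m
  rw [Nat.factorization_def _ hp]
  have := sp_le p m
  simp only [sp] at *
  omega

lemma sp_subadd {p : ℕ} (hp : p.Prime) (a b : ℕ) : sp p (a + b) ≤ sp p a + sp p b := by
  have ha := legendre' hp a
  have hb := legendre' hp b
  have hab := legendre' hp (a + b)
  have hdvd : Nat.factorial a * Nat.factorial b ∣ Nat.factorial (a + b) :=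
    Nat.factorial_mul_factorial_dvd_factorial_add a b
  have hle : (Nat.factorial a).factorization p + (Nat.factorial b).factorization p ≤
      (Nat.factorial (a + b)).factorization p := by
    have h1 := (Nat.factorization_le_iff_dvd
      (Nat.mul_ne_zero (Nat.factorial_ne_zero a) (Nat.factorial_ne_zero b))
      (Nat.factorial_ne_zero (a + b))).mpr hdvd
    have h2 := h1 p
    rwa [Nat.factorization_mul (Nat.factorial_ne_zero a) (Nat.factorial_ne_zero b),
      Finsupp.add_apply] at h2
  set x := (Nat.factorial a).factorization p
  set y := (Nat.factorial b).factorization p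
  set z := (Nat.factorial (a + b)).factorization p
  have : (p - 1) * (x + y) ≤ (p - 1) * z := Nat.mul_le_mul_left _ hle
  have hx : (p-1) * (x + y) = (p-1)*x + (p-1)*y := Nat.mul_add _ _ _
  omega

lemma sp_sum_le {p : ℕ} (hp : p.Prime) {α : Type*} (s : Finset α) (f : α → ℕ) :
    sp p (∑ i ∈ s, f i) ≤ ∑ i ∈ s, sp p (f i) := by
  classical
  induction s using Finset.cons_induction with
  | empty => simp [sp]
  | cons a s ha ih =>
    rw [Finset.sum_cons, Finset.sum_cons]
    exact le_trans (sp_subadd hp _ _) (Nat.add_le_add_left ih _)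

/-- Splitting construction: a composition of `n` into `k` parts with no carries. -/
lemma exists_split {p : ℕ} (hp : 2 ≤ p) : ∀ (k : ℕ) {n : ℕ}, 1 ≤ k → k ≤ sp p n →
    ∃ j : Fin k → ℕ, (∀ i, 1 ≤ j i) ∧ ∑ i, j i = n ∧ ∑ i, sp p (j i) ≤ sp p n := by
  intro k
  induction k with
  | zero => omega
  | succ k ih =>
    intro n _ hk
    have hsp0 : sp p 0 = 0 := by simp [sp]
    have hn1 : 1 ≤ n := by
      rcases Nat.eq_zero_or_pos n with h0 | h0
      · rw [h0] at hk; omega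
      · exact h0
    rcases Nat.eq_zero_or_pos k with hk0 | hk1
    · subst hk0
      exact ⟨fun _ => n, fun _ => hn1, by simp, by simp⟩
    · -- k ≥ 1, split off p ^ log p n
      have hsp2 : 2 ≤ sp p n := by omega
      set e := Nat.log p n with he
      have hpe : p ^ e ≤ n := Nat.pow_log_le_self p (by omega)
      set m := n - p ^ e with hm
      have hspm : sp p m = sp p n - 1 := sp_sub_pow_log hp hn1
      have hm1 : 1 ≤ m := by
        by_contra h
        have hm0 : m = 0 := by omega
        rw [hm0, hsp0] at hspm
        omega
      obtain ⟨j', hj'1, hj'2, hj'3⟩ := ih hk1 (by omega : k ≤ sp p m)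
      refine ⟨Fin.cons (p ^ e) j', ?_, ?_, ?_⟩
      · intro i
        refine Fin.cases ?_ ?_ i
        · exact Nat.one_le_pow _ _ (by omega)
        · intro i; exact hj'1 i
      · simp only [Fin.sum_univ_succ, Fin.cons_zero, Fin.cons_succ]
        rw [hj'2]; omega
      · simp only [Fin.sum_univ_succ, Fin.cons_zero, Fin.cons_succ]
        rw [sp_pow hp]
        omega

lemma bern {p : ℕ} (hp : 1 ≤ p) (m : ℕ) : 1 + m * (p - 1) ≤ p ^ m := by
  induction m with
  | zero => simp
  | succ m ih =>
    have h1 : (1 + m * (p - 1)) * p ≤ p ^ m * p := Nat.mul_le_mul_right _ ih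
    have h2 : 1 + (m + 1) * (p - 1) ≤ (1 + m * (p - 1)) * p := by
      rcases Nat.exists_eq_add_of_le hp with ⟨c, hc⟩
      subst hc
      simp only [Nat.add_sub_cancel_left] at *
      have hr : (1 + m * c) * (1 + c) = 1 + c + m * c + m * c * c := by ring
      have hg : (m + 1) * c = m * c + c := by ring
      omega
    calc 1 + (m + 1) * (p - 1) ≤ (1 + m * (p - 1)) * p := h2
      _ ≤ p ^ m * p := h1
      _ = p ^ (m + 1) := (pow_succ p m).symm

lemma core_ineq {p t L S s : ℕ} (hp : 2 ≤ p) (hts : p ^ t ≤ S) (hLs : p ^ L ≤ s)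
    (hsL : s < p ^ (L + 1)) (hss : s ≤ S) (hdvd : (p - 1) ∣ (S - s)) :
    (p - 1) * t ≤ (S - s) + (p - 1) * L := by
  rcases le_or_gt t L with h | h
  · have : (p - 1) * t ≤ (p - 1) * L := Nat.mul_le_mul_left _ h
    omega
  · set m := t - (L + 1) with hm
    have ht : t = L + 1 + m := by omega
    rcases Nat.eq_zero_or_pos m with hm0 | hm1
    · -- t = L + 1
      have hS : p ^ (L + 1) ≤ S := by
        have hpt : p ^ t = p ^ (L + 1) := by rw [ht, hm0]
        omega
      have hpos : 0 < S - s := by omega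
      have hge : p - 1 ≤ S - s := Nat.le_of_dvd hpos hdvd
      have hexp : (p - 1) * t = (p - 1) * L + (p - 1) := by
        rw [ht, hm0]; ring
      omega
    · -- t ≥ L + 2
      have hA : p ^ t = p ^ (L + 1) * p ^ m := by rw [ht, pow_add]
      set A := p ^ (L + 1) with hA'
      set B := p ^ m with hB'
      have hZ : A * B ≤ S := by rw [← hA]; exact hts
      have hW : A * (B - 1) = A * B - A := by rw [Nat.mul_sub, mul_one]
      have hpA : p ≤ A := by
        calc p = p ^ 1 := (pow_one p).symm
        _ ≤ A := Nat.pow_le_pow_right (by omega) (by omega)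
      have h1 : p * (B - 1) ≤ A * (B - 1) := Nat.mul_le_mul_right _ hpA
      have h2 : m * (p - 1) ≤ B - 1 := by have := bern (by omega : 1 ≤ p) m; omega
      have h3 : p * (m * (p - 1)) ≤ p * (B - 1) := Nat.mul_le_mul_left _ h2
      have h4 : (m + 1) * (p - 1) ≤ p * (m * (p - 1)) := by
        have hmm : m + 1 ≤ p * m := by nlinarith
        calc (m + 1) * (p - 1) ≤ (p * m) * (p - 1) := Nat.mul_le_mul_right _ hmm
          _ = p * (m * (p - 1)) := by ring
      have hexp : (p - 1) * t = (p - 1) * L + (m + 1) * (p - 1) := by rw [ht]; ring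
      omega

lemma dn_ne_zero (n : ℕ) : dn n ≠ 0 := by
  rw [dn]
  apply Finset.prod_ne_zero_iff.mpr
  intro q hq
  rw [Finset.mem_filter] at hq
  exact pow_ne_zero _ hq.2.pos.ne'

lemma log_sp_eq_zero_of_ge {p n : ℕ} (hp : p.Prime) (hn : 1 ≤ n) (h : n ≤ p) :
    Nat.log p (sp p n) = 0 := by
  rcases Nat.eq_or_lt_of_le h with he | hlt
  · subst he
    rw [show sp n n = 1 from by simpa using sp_pow hp.two_le 1]
    exact Nat.log_one_right n
  · rw [sp_lt_base hp.two_le hlt]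
    exact Nat.log_eq_zero_iff.mpr (Or.inl hlt)

lemma dn_factorization {n : ℕ} (hn : 1 ≤ n) {p : ℕ} (hp : p.Prime) :
    (dn n).factorization p = Nat.log p (sp p n) := by
  rw [dn, Nat.factorization_prod (fun q hq => by
    rw [Finset.mem_filter] at hq
    exact pow_ne_zero _ hq.2.pos.ne')]
  rw [Finset.sum_apply']
  have hterm : ∀ q, q.Prime → ((q ^ Nat.log q (sp q n)).factorization) p
      = Nat.log q (sp q n) * (if q = p then 1 else 0) := by
    intro q hq
    rw [Nat.factorization_pow, Finsupp.smul_apply, hq.factorization]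
    simp [Finsupp.single_apply]
  by_cases hmem : p ∈ (Finset.range n).filter Nat.Prime
  · rw [Finset.sum_eq_single_of_mem p hmem]
    · rw [hterm p hp]; simp
    · intro q hq hqp
      rw [Finset.mem_filter] at hq
      rw [hterm q hq.2]
      simp [hqp]
  · rw [Finset.sum_eq_zero, eq_comm]
    · apply log_sp_eq_zero_of_ge hp hn
      rw [Finset.mem_filter, Finset.mem_range] at hmem
      by_contra hcon
      push_neg at hcon
      exact hmem ⟨hcon, hp⟩
    · intro q hq
      rw [Finset.mem_filter] at hq
      rw [hterm q hq.2]
      have : q ≠ p := fun h => hmem (h ▸ Finset.mem_filter.mpr hq)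
      simp [this]

lemma sum_legendre {p : ℕ} (hp : p.Prime) {k : ℕ} (j : Fin k → ℕ) :
    ∑ i, sp p (j i) + (p - 1) * ∑ i, (Nat.factorial (j i)).factorization p = ∑ i, j i := by
  rw [Finset.mul_sum, ← Finset.sum_add_distrib]
  exact Finset.sum_congr rfl fun i _ => legendre' hp (j i)

theorem Dn_eq_factorial_mul_dn (n : ℕ) (hn : 1 ≤ n) :
    Dn n = n.factorial * dn n := by
  have hfact0 : n.factorial ≠ 0 := Nat.factorial_ne_zero n
  have hdn0 : dn n ≠ 0 := dn_ne_zero n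
  have htgt0 : n.factorial * dn n ≠ 0 := mul_ne_zero hfact0 hdn0
  have hprod0 : ∀ (k : ℕ) (j : Fin k → ℕ), (∏ i, Nat.factorial (j i)) ≠ 0 := by
    intro k j
    exact Finset.prod_ne_zero_iff.mpr fun i _ => Nat.factorial_ne_zero _
  have hterm0 : ∀ (k : ℕ), 1 ≤ k → ∀ j : Fin k → ℕ, k * ∏ i, Nat.factorial (j i) ≠ 0 := by
    intro k hk j
    exact mul_ne_zero (by omega) (hprod0 k j)
  have hDn0 : Dn n ≠ 0 := by
    rw [Dn]
    intro h
    rw [Finset.lcm_eq_zero_iff] at h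
    obtain ⟨k, hk, hk0⟩ := h
    rw [Finset.lcm_eq_zero_iff] at hk0
    obtain ⟨j, hj, hj0⟩ := hk0
    exact hterm0 k (Finset.mem_Icc.mp (Finset.mem_coe.mp hk)).1 j hj0
  apply Nat.dvd_antisymm
  · -- Dn ∣ n! * dn
    apply Finset.lcm_dvd
    intro k hk
    apply Finset.lcm_dvd
    intro j hj
    rw [Finset.mem_Icc] at hk
    rw [Finset.mem_filter, Finset.Nat.mem_antidiagonalTuple] at hj
    obtain ⟨hsum, hpos⟩ := hj
    rw [← Nat.factorization_le_iff_dvd (hterm0 k hk.1 j) htgt0]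
    apply Finsupp.le_def.mpr
    intro p
    by_cases hp : p.Prime
    case neg => simp [Nat.factorization_eq_zero_of_not_prime _ hp]
    have hps := hp.two_le
    set s := sp p n with hs
    set L := Nat.log p s with hL
    set t := k.factorization p with ht
    set V := ∑ i, (Nat.factorial (j i)).factorization p with hV
    set S := ∑ i, sp p (j i) with hS
    set vf := (n.factorial).factorization p with hvf
    have hLHS : (k * ∏ i, Nat.factorial (j i)).factorization p = t + V := by
      rw [Nat.factorization_mul (by omega) (hprod0 k j), Finsupp.add_apply,
        Nat.factorization_prod (fun i _ => Nat.factorial_ne_zero _), Finset.sum_apply']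
    have hRHS : (n.factorial * dn n).factorization p = vf + L := by
      rw [Nat.factorization_mul hfact0 hdn0, Finsupp.add_apply, dn_factorization hn hp]
    rw [hLHS, hRHS]
    have hSn : S + (p - 1) * V = n := by
      have := sum_legendre hp j
      rw [hsum] at this
      exact this
    have hsn : s + (p - 1) * vf = n := legendre' hp n
    have hsS : s ≤ S := by
      have := sp_sum_le hp Finset.univ j
      rw [hsum] at this
      exact this
    have hkS : k ≤ S := by
      have h1 : ∑ _i : Fin k, 1 ≤ S := Finset.sum_le_sum fun i _ => sp_pos hps (hpos i)
      simpa using h1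
    have hpt : p ^ t ≤ k := Nat.le_of_dvd (by omega) (Nat.ordProj_dvd k p)
    have hs1 : 1 ≤ s := sp_pos hps hn
    have hLs : p ^ L ≤ s := Nat.pow_log_le_self p (by omega)
    have hsL : s < p ^ (L + 1) := Nat.lt_pow_succ_log_self (by omega) s
    have hVvf : V ≤ vf := Nat.le_of_mul_le_mul_left (by omega) (show 0 < p - 1 by omega)
    have hdvd : (p - 1) ∣ (S - s) := by
      refine ⟨vf - V, ?_⟩
      have hms := Nat.mul_sub (p - 1) vf V
      omega
    have hcore := core_ineq hps (le_trans hpt hkS) hLs hsL hsS hdvd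
    have hmul : (p - 1) * (t + V) ≤ (p - 1) * (vf + L) := by
      have e1 : (p - 1) * (t + V) = (p - 1) * t + (p - 1) * V := Nat.mul_add _ _ _
      have e2 : (p - 1) * (vf + L) = (p - 1) * vf + (p - 1) * L := Nat.mul_add _ _ _
      omega
    exact Nat.le_of_mul_le_mul_left hmul (by omega)
  · -- n! * dn ∣ Dn
    rw [← Nat.factorization_le_iff_dvd htgt0 hDn0]
    apply Finsupp.le_def.mpr
    intro p
    by_cases hp : p.Prime
    case neg => simp [Nat.factorization_eq_zero_of_not_prime _ hp]
    have hps := hp.two_le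
    set s := sp p n with hs
    have hs1 : 1 ≤ s := sp_pos hps hn
    set L := Nat.log p s with hL
    have hks : p ^ L ≤ s := Nat.pow_log_le_self p (by omega)
    have hkn : p ^ L ≤ n := le_trans hks (sp_le p n)
    have hk1 : 1 ≤ p ^ L := Nat.one_le_pow _ _ (by omega)
    obtain ⟨j, hj1, hj2, hj3⟩ := exists_split hps (p ^ L) hk1 hks
    have hT0 : (p ^ L) * ∏ i, Nat.factorial (j i) ≠ 0 := hterm0 _ hk1 j
    have hTdvd : (p ^ L) * ∏ i, Nat.factorial (j i) ∣ Dn n := by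
      rw [Dn]
      refine dvd_trans ?_ (Finset.dvd_lcm (Finset.mem_Icc.mpr ⟨hk1, hkn⟩))
      exact Finset.dvd_lcm (Finset.mem_filter.mpr
        ⟨Finset.Nat.mem_antidiagonalTuple.mpr hj2, hj1⟩)
    have hle := Finsupp.le_def.mp
      ((Nat.factorization_le_iff_dvd hT0 hDn0).mpr hTdvd) p
    set V := ∑ i, (Nat.factorial (j i)).factorization p with hV
    set S := ∑ i, sp p (j i) with hS
    set vf := (n.factorial).factorization p with hvf
    have hTfact : ((p ^ L) * ∏ i, Nat.factorial (j i)).factorization p = L + V := by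
      rw [Nat.factorization_mul (by positivity) (hprod0 _ j), Finsupp.add_apply,
        Nat.factorization_prod (fun i _ => Nat.factorial_ne_zero _), Finset.sum_apply',
        Nat.Prime.factorization_pow hp, Finsupp.single_eq_same]
    have hRHS : (n.factorial * dn n).factorization p = vf + L := by
      rw [Nat.factorization_mul hfact0 hdn0, Finsupp.add_apply, dn_factorization hn hp]
    have hSn : S + (p - 1) * V = n := by
      have := sum_legendre hp j
      rw [hj2] at this
      exact this
    have hsn : s + (p - 1) * vf = n := legendre' hp n
    have hvfV : vf ≤ V := Nat.le_of_mul_le_mul_left (by omega) (show 0 < p - 1 by omega)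
    rw [hRHS]
    rw [hTfact] at hle
    omega
end

section
/- Let p be prime, n ≥ 1, and l = max{t : p^t ≤ s_p(n)}. Then there exist k with 1 ≤ k ≤ n and positive integers j_1,...,j_k with j_1+...+j_k = n such that v_p(k · j_1!···j_k!) = v_p(n!) + l. In particular one may take k = p^l. -/
lemma sp_mul_add (p : ℕ) (hp : 1 < p) (q r : ℕ) (hr : r < p) :
    sp p (p * q + r) = r + sp p q := by
  rcases Nat.eq_zero_or_pos (p * q + r) with h | h
  · have hq : q = 0 := by nlinarith
    have hr0 : r = 0 := by omega
    simp [sp, hq, hr0]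
  · unfold sp
    rw [Nat.digits_def' hp h]
    have h1 : (p * q + r) % p = r := by
      simp [Nat.mul_add_mod, Nat.mod_eq_of_lt hr]
    have h2 : (p * q + r) / p = q := by
      rw [Nat.mul_add_div (by omega), Nat.div_eq_of_lt hr]; omega
    rw [h1, h2, List.sum_cons]

lemma sp_one (p : ℕ) (hp : 1 < p) : sp p 1 = 1 := by
  have := sp_mul_add p hp 0 1 hp
  simpa [sp] using this

lemma sp_pred (p : ℕ) (hp : 1 < p) (m : ℕ) (hm : ¬ p ∣ m) :
    sp p (m - 1) = sp p m - 1 ∧ 1 ≤ sp p m := by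
  have hm0 : m ≠ 0 := by rintro rfl; simp at hm
  set q := m / p with hq
  set r := m % p with hr
  have hrp : r < p := Nat.mod_lt _ (by omega)
  have hr1 : 1 ≤ r := by
    rcases Nat.eq_zero_or_pos r with h | h
    · exact absurd (Nat.dvd_of_mod_eq_zero (by omega)) hm
    · exact h
  have hmeq : m = p * q + r := by
    rw [hq, hr]; exact (Nat.div_add_mod m p).symm
  have e1 : sp p m = r + sp p q := by
    conv_lhs => rw [hmeq]
    exact sp_mul_add p hp q r hrp
  have e2 : sp p (m - 1) = (r - 1) + sp p q := by
    have h3 : m - 1 = p * q + (r - 1) := by omega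
    rw [h3]; exact sp_mul_add p hp q (r - 1) (by omega)
  omega

lemma sp_pow_mul (p : ℕ) (hp : 1 < p) (e m : ℕ) (hm : 0 < m) :
    sp p (p ^ e * m) = sp p m := by
  unfold sp
  rw [Nat.digits_base_pow_mul hp hm]
  simp

lemma sp_split (p : ℕ) (hp : p.Prime) (m : ℕ) (hm : 2 ≤ sp p m) :
    ∃ a b, 1 ≤ a ∧ 1 ≤ b ∧ a + b = m ∧ sp p a + sp p b = sp p m := by
  have hm0 : m ≠ 0 := by rintro rfl; simp [sp] at hm
  set e := m.factorization p with he
  obtain ⟨m', hm'⟩ : p ^ e ∣ m := Nat.ordProj_dvd m p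
  have hm'0 : m' ≠ 0 := by rintro rfl; simp at hm'; exact hm0 hm'
  have hnd : ¬ p ∣ m' := by
    intro hd
    have h7 : p ^ e * p ∣ p ^ e * m' := mul_dvd_mul_left _ hd
    rw [← hm'] at h7
    exact Nat.pow_succ_factorization_not_dvd hm0 hp (by rw [pow_succ]; exact h7)
  have hsp : sp p m = sp p m' := by rw [hm']; exact sp_pow_mul p hp.one_lt e m' (by omega)
  obtain ⟨e1, _⟩ := sp_pred p hp.one_lt m' hnd
  have hm'2 : 2 ≤ m' := by
    by_contra h
    have : m' = 1 := by omega
    rw [this, sp_one p hp.one_lt] at hsp; omega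
  obtain ⟨t, rfl⟩ : ∃ t, m' = t + 1 := ⟨m' - 1, by omega⟩
  have hpe1 : 1 ≤ p ^ e := Nat.one_le_pow _ _ hp.pos
  refine ⟨p ^ e, p ^ e * t, hpe1, Nat.mul_pos (by omega) (by omega), ?_, ?_⟩
  · have h4 : p ^ e * (t + 1) = p ^ e * t + p ^ e := by ring
    omega
  · have hpe : sp p (p ^ e) = 1 := by
      have := sp_pow_mul p hp.one_lt e 1 one_pos
      rwa [mul_one, sp_one p hp.one_lt] at this
    have h5 : sp p (p ^ e * t) = sp p t := sp_pow_mul p hp.one_lt e t (by omega)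
    have h6 : sp p t = sp p (t + 1) - 1 := by simpa using e1
    omega

lemma sp_comp (p : ℕ) (hp : p.Prime) (n : ℕ) (hn : 1 ≤ n) :
    ∀ k, 1 ≤ k → k ≤ sp p n →
      ∃ L : List ℕ, L.length = k ∧ (∀ x ∈ L, 1 ≤ x) ∧ L.sum = n ∧
        (L.map (sp p)).sum = sp p n := by
  intro k
  induction k with
  | zero => omega
  | succ k ih =>
    intro _ hk
    rcases Nat.eq_zero_or_pos k with rfl | hk1
    · exact ⟨[n], rfl, by simpa using hn, by simp, by simp⟩
    · obtain ⟨L, hlen, hpos, hsum, hsp⟩ := ih hk1 (by omega)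
      have hx : ∃ x ∈ L, 2 ≤ sp p x := by
        by_contra h
        push_neg at h
        have : (L.map (sp p)).sum ≤ (L.map (sp p)).length • 1 := by
          apply List.sum_le_card_nsmul
          intro x hx
          obtain ⟨y, hy, rfl⟩ := List.mem_map.mp hx
          have := h y hy; omega
        simp [hlen] at this
        omega
      obtain ⟨x, hxL, hx2⟩ := hx
      obtain ⟨s, t, rfl⟩ := List.append_of_mem hxL
      obtain ⟨a, b, ha, hb, hab, hspab⟩ := sp_split p hp x hx2
      refine ⟨s ++ a :: b :: t, ?_, ?_, ?_, ?_⟩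
      · simp at hlen ⊢; omega
      · intro y hy
        simp at hy
        rcases hy with h | h | h | h
        · exact hpos y (by simp [h])
        · omega
        · omega
        · exact hpos y (by simp [h])
      · simp at hsum ⊢; omega
      · simp at hsp ⊢; omega

theorem exists_composition_padicValNat_eq (p : ℕ) (hp : p.Prime) (n : ℕ) (hn : 1 ≤ n)
    (l : ℕ) (hl : l = Nat.log p (sp p n)) :
    ∃ k : ℕ, 1 ≤ k ∧ k ≤ n ∧ k = p ^ l ∧
      ∃ j : Fin k → ℕ, (∀ i, 1 ≤ j i) ∧ (∑ i, j i = n) ∧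
        padicValNat p (k * ∏ i, Nat.factorial (j i)) =
          padicValNat p n.factorial + l := by
  haveI : Fact p.Prime := ⟨hp⟩
  have hs0 : sp p n ≠ 0 := by
    intro h
    have hne : Nat.digits p n ≠ [] := Nat.digits_ne_nil_iff_ne_zero.mpr (by omega)
    have hlast := Nat.getLast_digit_ne_zero p (show n ≠ 0 by omega)
    have hall : ∀ x ∈ Nat.digits p n, x = 0 := List.sum_eq_zero_iff.mp h
    exact hlast (hall _ (List.getLast_mem hne))
  have hps : p ^ l ≤ sp p n := hl ▸ Nat.pow_log_le_self p hs0
  have hspn : sp p n ≤ n := Nat.digit_sum_le p n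
  have hk1 : 1 ≤ p ^ l := Nat.one_le_pow _ _ hp.pos
  obtain ⟨L, hlen, hpos, hsum, hsp⟩ := sp_comp p hp n hn (p ^ l) hk1 hps
  refine ⟨p ^ l, hk1, le_trans hps hspn, rfl,
    fun i => L.get (Fin.cast hlen.symm i), fun i => hpos _ (L.get_mem _), ?_, ?_⟩
  · rw [Fin.sum_congr' L.get hlen.symm]
    have := Fin.sum_univ_getElem L
    simp at this ⊢
    omega
  · have hP : (∏ i : Fin (p ^ l), (L.get (Fin.cast hlen.symm i)).factorial)
        = (L.map Nat.factorial).prod := by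
      rw [Fin.prod_congr' (fun i => (L.get i).factorial) hlen.symm]
      simpa using Fin.prod_univ_get' L Nat.factorial
    have hP2 : (L.map Nat.factorial).prod = ∏ i : Fin L.length, (L.get i).factorial := by
      simpa using (Fin.prod_univ_get' L Nat.factorial).symm
    have hPne : (L.map Nat.factorial).prod ≠ 0 := by
      have : 0 < (L.map Nat.factorial).prod := by
        apply List.prod_pos
        intro x hx
        obtain ⟨y, _, rfl⟩ := List.mem_map.mp hx
        exact Nat.factorial_pos y
      omega
    have hfac : padicValNat p ((L.map Nat.factorial).prod)
        = ∑ i : Fin L.length, padicValNat p (L.get i).factorial := by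
      rw [hP2]
      have h0 := Nat.factorization_prod
        (S := (Finset.univ : Finset (Fin L.length)))
        (g := fun i => (L.get i).factorial)
        (fun i _ => (Nat.factorial_pos _).ne')
      have h1 := congrArg (fun f => f p) h0
      simp only [Finsupp.finset_sum_apply] at h1
      rw [Nat.factorization_def _ hp] at h1
      rw [h1]
      exact Finset.sum_congr rfl fun i _ => Nat.factorization_def _ hp
    have hS : (∑ i : Fin L.length, padicValNat p (L.get i).factorial)
        = padicValNat p n.factorial := by
      apply Nat.eq_of_mul_eq_mul_left (show 0 < p - 1 by have := hp.two_le; omega)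
      rw [Finset.mul_sum, sub_one_mul_padicValNat_factorial]
      have hterm : ∀ i : Fin L.length,
          (p - 1) * padicValNat p (L.get i).factorial = L.get i - sp p (L.get i) :=
        fun i => sub_one_mul_padicValNat_factorial _
      rw [Finset.sum_congr rfl fun i _ => hterm i]
      simp only [sp]
      rw [Finset.sum_tsub_distrib Finset.univ (fun i _ => Nat.digit_sum_le p (L.get i))]
      have e1 : (∑ i : Fin L.length, L.get i) = n := by
        have := Fin.sum_univ_getElem L
        simp at this ⊢
        omega
      have e2 : (∑ i : Fin L.length, sp p (L.get i)) = sp p n := by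
        have := Fin.sum_univ_fun_getElem L (sp p)
        simp at this ⊢
        omega
      simp only [sp] at e2
      rw [e1, e2]
    rw [hP, padicValNat.mul (by omega) hPne, padicValNat.prime_pow, hfac, hS]
    omega
end
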